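/- Let T be a continuous bundle random dynamical system on E over (Ω,F,P,ϑ). Fix x ∈ X_E, k,n ∈ ℕ with k ≥ n and ε > 0, and let s_n(ω,ε) denote the largest cardinality of an (ω,n,ε)-separated subset of (T_ω^k)^{-1}x, and for l ≥ 1 let t_{n,l}(ω,ε) = max{q : there exist x_1,…,x_q ∈ (T_ω^k)^{-1}x with d_n^ω(x_i,x_j) ≥ ε + 1/l for all i ≠ j}. Then each t_{n,l}(·,ε) is measurable in ω, s_n(·,ε) is measurable in ω, t_{n,l}(ω,ε) increases to s_n(ω,ε) as l → ∞, and for each ω one has t_{n,l}(ω,ε) = s_n(ω,ε) for all l large enough. -/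

import Mathlib

set_option linter.unusedSectionVars false
set_option linter.unnecessarySimpa false


open MeasureTheory Filter Set

namespace PreImageRDS

variable {Ω : Type} [MeasurableSpace Ω] {X : Type} [MetricSpace X] [CompactSpace X]
  [MeasurableSpace X] [BorelSpace X]

/-- The fiber `E_ω = {x : (ω, x) ∈ E}`. -/
def fiber (E : Set (Ω × X)) (ω : Ω) : Set X := {x | (ω, x) ∈ E}

/-- `X_E = {x : (ω, x) ∈ E for some ω}`. -/
def XE (E : Set (Ω × X)) : Set X := {x | ∃ ω, (ω, x) ∈ E}

/-- The iterates `T_ω^n = T_{ϑ^{n-1}ω} ∘ ⋯ ∘ T_{ϑω} ∘ T_ω`. -/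
def Tn (ϑ : Ω → Ω) (T : Ω → X → X) : ℕ → Ω → X → X
  | 0 => fun _ x => x
  | n + 1 => fun ω x => Tn ϑ T n (ϑ ω) (T ω x)

/-- The skew product `Θ(ω,x) = (ϑω, T_ω x)`. -/
def skew (ϑ : Ω → Ω) (T : Ω → X → X) : Ω × X → Ω × X := fun p => (ϑ p.1, T p.1 p.2)

/-- The Bowen metric `d_n^ω(y,z) = max_{0 ≤ i < n} d(T_ω^i y, T_ω^i z)`. -/
noncomputable def dn (ϑ : Ω → Ω) (T : Ω → X → X) (n : ℕ) (ω : Ω) (y z : X) : ℝ :=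
  ((Finset.range n).sup fun i => nndist (Tn ϑ T i ω y) (Tn ϑ T i ω z) : NNReal)

/-- `F` is `(ω,n,ε)`-separated. -/
def IsSep (ϑ : Ω → Ω) (T : Ω → X → X) (n : ℕ) (ε : ℝ) (ω : Ω) (F : Set X) : Prop :=
  ∀ y ∈ F, ∀ z ∈ F, y ≠ z → ε < dn ϑ T n ω y z

/-- The pre-image fiber `(T_ω^k)^{-1} x ⊆ E_ω`. -/
def preFiber (ϑ : Ω → Ω) (T : Ω → X → X) (E : Set (Ω × X)) (k : ℕ) (x : X) (ω : Ω) :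
    Set X :=
  {y ∈ fiber E ω | Tn ϑ T k ω y = x}

/-- The Birkhoff sum `S_n f(ω,y) = ∑_{i<n} f(ϑ^i ω, T_ω^i y)`. -/
noncomputable def Snf (ϑ : Ω → Ω) (T : Ω → X → X) (f : Ω → X → ℝ) (n : ℕ) (ω : Ω)
    (y : X) : ℝ :=
  ∑ i ∈ Finset.range n, f (ϑ^[i] ω) (Tn ϑ T i ω y)

/-- `P_{pre,n,ω}(T,f,ε,(T_ω^k)^{-1}x)`. -/
noncomputable def PpreN (ϑ : Ω → Ω) (T : Ω → X → X) (E : Set (Ω × X)) (f : Ω → X → ℝ)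
    (n k : ℕ) (ε : ℝ) (x : X) (ω : Ω) : ℝ :=
  sSup {r : ℝ | ∃ F : Finset X, ↑F ⊆ preFiber ϑ T E k x ω ∧ IsSep ϑ T n ε ω ↑F ∧
    r = ∑ y ∈ F, Real.exp (Snf ϑ T f n ω y)}

/-- `P_pre(T,f,ε)`. -/
noncomputable def PpreEps (P : Measure Ω) (ϑ : Ω → Ω) (T : Ω → X → X) (E : Set (Ω × X))
    (f : Ω → X → ℝ) (ε : ℝ) : ℝ :=
  limsup (fun n : ℕ => (1 / (n : ℝ)) *
    sSup {r : ℝ | ∃ k ≥ n, ∃ x ∈ XE E,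
      r = ∫ ω, Real.log (PpreN ϑ T E f n k ε x ω) ∂P}) atTop

/-- The pre-image topological pressure `P_pre(T,f) = lim_{ε→0} P_pre(T,f,ε)
    (`= sup_{ε>0} P_pre(T,f,ε)` by monotonicity in `ε`). -/
noncomputable def Ppre (P : Measure Ω) (ϑ : Ω → Ω) (T : Ω → X → X) (E : Set (Ω × X))
    (f : Ω → X → ℝ) : ℝ :=
  sSup {r : ℝ | ∃ ε > (0 : ℝ), r = PpreEps P ϑ T E f ε}

/-- The σ-algebra `F_E` (sets depending only on ω). -/
def mF (Ω X : Type) [MeasurableSpace Ω] [MeasurableSpace X] : MeasurableSpace (Ω × X) :=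
  MeasurableSpace.comap Prod.fst inferInstance

/-- The σ-algebra `(F×B)^-_E = ⋂_{n ≥ 0} Θ^{-n}(F×B)_E`. -/
def mMinus (ϑ : Ω → Ω) (T : Ω → X → X) : MeasurableSpace (Ω × X) :=
  ⨅ n : ℕ, MeasurableSpace.comap ((skew ϑ T)^[n]) inferInstance

/-- The fiberwise σ-algebra `B^-_ω = ⋂_{n ≥ 0}(T_ω^n)^{-1} B_{ϑ^n ω}`. -/
def mMinusFiber (ϑ : Ω → Ω) (T : Ω → X → X) (ω : Ω) : MeasurableSpace X :=
  ⨅ n : ℕ, MeasurableSpace.comap (Tn ϑ T n ω) inferInstance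

/-- Conditional entropy `H_μ(Q | m)` of a finite family of sets given a σ-algebra `m`,
    via conditional expectations of indicators. -/
noncomputable def condEntropyFam {α : Type} [MeasurableSpace α] (μ : Measure α)
    (m : MeasurableSpace α) {ι : Type} [Fintype ι] (Q : ι → Set α) : ℝ :=
  - ∫ a, ∑ i, ((μ[(Q i).indicator (fun _ => (1 : ℝ)) | m]) a) *
      Real.log ((μ[(Q i).indicator (fun _ => (1 : ℝ)) | m]) a) ∂μ

/-- `Q` is a finite measurable partition of `E`. -/
def IsFinPart {α : Type} [MeasurableSpace α] {ι : Type} [Fintype ι] (Q : ι → Set α)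
    (E : Set α) : Prop :=
  (∀ i, MeasurableSet (Q i)) ∧ (∀ i j, i ≠ j → Disjoint (Q i) (Q j)) ∧ (⋃ i, Q i) = E

/-- `h^{(r)}_{pre,μ}(T,Q) = lim_n (1/n) H_μ(⋁_{i<n} Θ^{-i}Q | F_E ∨ (F×B)^-_E)`. -/
noncomputable def hPrePart (ϑ : Ω → Ω) (T : Ω → X → X) (μ : Measure (Ω × X))
    {N : ℕ} (Q : Fin N → Set (Ω × X)) : ℝ :=
  limsup (fun n : ℕ => (1 / (n : ℝ)) * condEntropyFam μ (mF Ω X ⊔ mMinus ϑ T)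
    (fun j : Fin n → Fin N => ⋂ i : Fin n, (skew ϑ T)^[(i : ℕ)] ⁻¹' Q (j i))) atTop

/-- The pre-image measure-theoretic entropy `h^{(r)}_{pre,μ}(T)`. -/
noncomputable def hPre (ϑ : Ω → Ω) (T : Ω → X → X) (E : Set (Ω × X))
    (μ : Measure (Ω × X)) : ℝ :=
  sSup {h : ℝ | ∃ (N : ℕ) (Q : Fin N → Set (Ω × X)), IsFinPart Q E ∧
    h = hPrePart ϑ T μ Q}

/-- `μ ∈ M^1_P(E,T)`: a Θ-invariant probability measure on `E` with marginal `P`. -/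
def IsPInv (P : Measure Ω) (ϑ : Ω → Ω) (T : Ω → X → X) (E : Set (Ω × X))
    (μ : Measure (Ω × X)) : Prop :=
  IsProbabilityMeasure μ ∧ μ E = 1 ∧ μ.map Prod.fst = P ∧ μ.map (skew ϑ T) = μ


/-- `s_n(ω,ε)`: the largest cardinality of an `(ω,n,ε)`-separated subset of
    the pre-image fiber `(T_ω^k)^{-1}x`. -/
noncomputable def sepMaxCard (ϑ : Ω → Ω) (T : Ω → X → X) (E : Set (Ω × X))
    (n k : ℕ) (ε : ℝ) (x : X) (ω : Ω) : ℕ :=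
  sSup {q : ℕ | ∃ F : Finset X, ↑F ⊆ preFiber ϑ T E k x ω ∧ IsSep ϑ T n ε ω ↑F ∧
    F.card = q}

/-- `t_{n,l}(ω,ε)`: the largest `q` such that there exist `x₁,…,x_q` in `(T_ω^k)^{-1}x`
    with `d_n^ω(x_i,x_j) ≥ ε + 1/l` for `i ≠ j`. -/
noncomputable def sepMaxCardGe (ϑ : Ω → Ω) (T : Ω → X → X) (E : Set (Ω × X))
    (n k : ℕ) (ε : ℝ) (l : ℕ) (x : X) (ω : Ω) : ℕ :=
  sSup {q : ℕ | ∃ F : Finset X, ↑F ⊆ preFiber ϑ T E k x ω ∧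
    (∀ y ∈ F, ∀ z ∈ F, y ≠ z → ε + 1 / (l : ℝ) ≤ dn ϑ T n ω y z) ∧ F.card = q}


section AuxProjection

open Topology MeasurableSpace

private lemma aux_step_lemma {Z : Type} [TopologicalSpace Z] [MeasurableSpace Z]
    (μ : Measure Z) [IsFiniteMeasure μ] (f : (ℕ → ℕ) → Z)
    (b : ℕ → ℕ) (k : ℕ) {δ : ENNReal} (hδ : 0 < δ) :
    ∃ m : ℕ, μ (f '' {x | ∀ i < k, x i ≤ b i}) ≤
      μ (f '' {x | ∀ i < k + 1, x i ≤ Function.update b k m i}) + δ := by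
  have hUnion : {x : ℕ → ℕ | ∀ i < k, x i ≤ b i} =
      ⋃ m : ℕ, {x | ∀ i < k + 1, x i ≤ Function.update b k m i} := by
    ext y
    simp only [mem_iUnion, mem_setOf_eq]
    constructor
    · intro h
      refine ⟨y k, fun i hi => ?_⟩
      rcases Nat.lt_succ_iff_lt_or_eq.mp hi with hi | rfl
      · rw [Function.update_of_ne hi.ne]; exact h i hi
      · simp
    · rintro ⟨m, hm⟩ i hi
      have := hm i (hi.trans (Nat.lt_succ_self k))
      rwa [Function.update_of_ne hi.ne] at this
  have hdir : Directed (fun a b : Set Z => a ⊆ b)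
      (fun m : ℕ => f '' {x | ∀ i < k + 1, x i ≤ Function.update b k m i}) := by
    intro m₁ m₂
    refine ⟨max m₁ m₂, image_mono fun y hy i hi => ?_, image_mono fun y hy i hi => ?_⟩ <;>
    · have h2 := hy i hi
      rcases eq_or_ne i k with rfl | h
      · simp only [Function.update_self] at h2 ⊢
        exact h2.trans (by simp)
      · rwa [Function.update_of_ne h] at h2 ⊢
  have hsup : μ (f '' {x | ∀ i < k, x i ≤ b i}) =
      ⨆ m : ℕ, μ (f '' {x | ∀ i < k + 1, x i ≤ Function.update b k m i}) := by
    rw [hUnion, image_iUnion]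
    exact hdir.measure_iUnion
  set s := μ (f '' {x | ∀ i < k, x i ≤ b i}) with hs
  rcases le_or_gt s δ with h | h
  · exact ⟨0, h.trans le_add_self⟩
  · have hstop : s ≠ ⊤ := measure_ne_top μ _
    have hlt : s - δ < s := ENNReal.sub_lt_self hstop (hδ.trans h).ne' hδ.ne'
    obtain ⟨m, hm⟩ := lt_iSup_iff.mp (hlt.trans_le hsup.le)
    refine ⟨m, le_of_lt ?_⟩
    exact (ENNReal.sub_lt_iff_lt_right (h.trans_le le_top).ne h.le).mp hm

/-- Inner approximation of an analytic set by a compact subset, up to `ε` in outer measure. -/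
private lemma aux_analytic_inner {Z : Type} [TopologicalSpace Z] [T2Space Z]
    [FirstCountableTopology Z] [MeasurableSpace Z] [OpensMeasurableSpace Z]
    (μ : Measure Z) [IsFiniteMeasure μ] {S : Set Z} (hS : AnalyticSet S)
    {ε : ENNReal} (hε : 0 < ε) :
    ∃ C : Set Z, IsCompact C ∧ C ⊆ S ∧ μ S ≤ μ C + ε := by
  rw [AnalyticSet_def] at hS
  rcases hS with hS | ⟨f, hf, rfl⟩
  · exact ⟨∅, isCompact_empty, by simp [hS], by simp [hS]⟩
  have hstep : ∀ (b : ℕ → ℕ) (k : ℕ), ∃ m : ℕ,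
      μ (f '' {x | ∀ i < k, x i ≤ b i}) ≤
        μ (f '' {x | ∀ i < k + 1, x i ≤ Function.update b k m i}) + ε / 2 ^ (k + 1) :=
    fun b k => aux_step_lemma μ f b k
      (ENNReal.div_pos hε.ne' (ENNReal.pow_ne_top (by norm_num)))
  let p : ℕ → ℕ → ℕ := fun k =>
    Nat.rec (fun _ => 0) (fun k pk => Function.update pk k (hstep pk k).choose) k
  have hpsucc : ∀ k, p (k + 1) = Function.update (p k) k (hstep (p k) k).choose :=
    fun k => rfl
  let b : ℕ → ℕ := fun k => p (k + 1) k
  have hagree : ∀ k i, i < k → p k i = b i := by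
    intro k
    induction k with
    | zero => intro i hi; omega
    | succ k ih =>
      intro i hi
      rcases Nat.lt_succ_iff_lt_or_eq.mp hi with hi | rfl
      · rw [hpsucc k, Function.update_of_ne hi.ne, ih i hi]
      · rfl
  have hT : ∀ k, {x : ℕ → ℕ | ∀ i < k, x i ≤ b i} = {x | ∀ i < k, x i ≤ p k i} := by
    intro k; ext y; simp only [mem_setOf_eq]
    exact ⟨fun h i hi => by rw [hagree k i hi]; exact h i hi,
           fun h i hi => by rw [← hagree k i hi]; exact h i hi⟩
  have hmain : ∀ k, μ (range f) ≤
      μ (f '' {x | ∀ i < k, x i ≤ b i}) + ∑ i ∈ Finset.range k, ε / 2 ^ (i + 1) := by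
    intro k
    induction k with
    | zero =>
      simp only [Finset.range_zero, Finset.sum_empty, add_zero]
      have : {x : ℕ → ℕ | ∀ i < 0, x i ≤ b i} = univ := by ext; simp
      rw [this, image_univ]
    | succ k ih =>
      have h1 := (hstep (p k) k).choose_spec
      rw [← hpsucc k, ← hT (k + 1), ← hT k] at h1
      calc μ (range f) ≤ μ (f '' {x | ∀ i < k, x i ≤ b i})
            + ∑ i ∈ Finset.range k, ε / 2 ^ (i + 1) := ih
        _ ≤ (μ (f '' {x | ∀ i < k + 1, x i ≤ b i}) + ε / 2 ^ (k + 1))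
            + ∑ i ∈ Finset.range k, ε / 2 ^ (i + 1) := add_le_add h1 le_rfl
        _ = _ := by rw [Finset.sum_range_succ]; ring
  have hsum : ∀ k, (∑ i ∈ Finset.range k, ε / 2 ^ (i + 1)) ≤ ε := by
    intro k
    calc (∑ i ∈ Finset.range k, ε / 2 ^ (i + 1)) ≤ ∑' i : ℕ, ε / 2 ^ (i + 1) :=
          ENNReal.sum_le_tsum _
      _ = ε := by
          have : ∀ i : ℕ, ε / 2 ^ (i + 1) = ε * 2⁻¹ * 2⁻¹ ^ i := by
            intro i
            rw [div_eq_mul_inv, pow_succ,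
              ENNReal.mul_inv (Or.inr ENNReal.ofNat_ne_top) (Or.inr (by norm_num)),
              ← ENNReal.inv_pow]
            ring
          simp_rw [this]
          rw [ENNReal.tsum_mul_left, ENNReal.tsum_geometric, ENNReal.one_sub_inv_two,
            inv_inv, mul_assoc, ENNReal.inv_mul_cancel (by norm_num) ENNReal.ofNat_ne_top,
            mul_one]
  set K : Set (ℕ → ℕ) := univ.pi (fun i => Iic (b i)) with hK
  have hKcomp : IsCompact K := isCompact_univ_pi fun i => (finite_Iic _).isCompact
  have hCcomp : IsCompact (f '' K) := hKcomp.image hf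
  have hcap : f '' K = ⋂ k, closure (f '' {x | ∀ i < k, x i ≤ b i}) := by
    apply Subset.antisymm
    · refine subset_iInter fun k => subset_closure.trans (closure_mono ?_) |>.trans le_rfl
      exact image_mono fun y hy i _ => hy i (mem_univ i)
    · intro z hz
      simp only [mem_iInter] at hz
      obtain ⟨V, hV⟩ := (𝓝 z).exists_antitone_basis
      have hu : ∀ k : ℕ, ∃ u : ℕ → ℕ, (∀ i < k, u i ≤ b i) ∧ f u ∈ V k := by
        intro k
        have := mem_closure_iff_nhds.mp (hz k) (V k) (hV.mem k)
        obtain ⟨w, hw1, y, hy, rfl⟩ := this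
        exact ⟨y, hy, hw1⟩
      choose u hu1 hu2 using hu
      set B : ℕ → ℕ := fun i => max (b i) ((Finset.range (i + 1)).sup fun k => u k i) with hB
      have huB : ∀ k, u k ∈ univ.pi fun i => Iic (B i) := by
        intro k i _
        simp only [mem_Iic, hB]
        rcases le_or_gt k i with h | h
        · exact le_max_of_le_right
            (Finset.le_sup (f := fun k => u k i) (Finset.mem_range.mpr (Nat.lt_succ_of_le h)))
        · exact le_max_of_le_left (hu1 k i h)
      have hKB : IsCompact (univ.pi fun i => Iic (B i)) :=
        isCompact_univ_pi fun i => (finite_Iic _).isCompact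
      have hne : (Filter.map u atTop).NeBot := Filter.map_neBot
      have hle : Filter.map u atTop ≤ 𝓟 (univ.pi fun i => Iic (B i)) := by
        rw [Filter.le_principal_iff, Filter.mem_map]
        exact Filter.Eventually.of_forall huB
      obtain ⟨y, -, hy⟩ := hKB.exists_clusterPt hle
      have hyK : y ∈ K := by
        intro i _
        have hclosed : IsClosed {w : ℕ → ℕ | w i ≤ b i} := by
          have : {w : ℕ → ℕ | w i ≤ b i} = (fun w : ℕ → ℕ => w i) ⁻¹' (Iic (b i)) := rfl
          rw [this]
          exact IsClosed.preimage (continuous_apply i) (isClosed_discrete (Iic (b i)))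
        have hmem : {w : ℕ → ℕ | w i ≤ b i} ∈ Filter.map u atTop := by
          rw [Filter.mem_map]
          filter_upwards [Filter.eventually_ge_atTop (i + 1)] with k hk
          exact hu1 k i hk
        have : ClusterPt y (𝓟 {w : ℕ → ℕ | w i ≤ b i}) :=
          hy.mono (Filter.le_principal_iff.mpr hmem)
        exact hclosed.closure_subset (mem_closure_iff_clusterPt.mpr this)
      have hfz : f y = z := by
        have h1 : ClusterPt (f y) (Filter.map (f ∘ u) atTop) := by
          have := hy.map (hf.continuousAt (x := y))
            (Filter.Tendsto.mono_left le_rfl Filter.tendsto_map)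
          simpa [Filter.map_map] using this
        have h2 : Filter.Tendsto (f ∘ u) atTop (𝓝 z) := hV.tendsto hu2
        have : (𝓝 (f y) ⊓ 𝓝 z).NeBot := h1.mono h2
        exact eq_of_nhds_neBot this
      exact ⟨y, hyK, hfz⟩
  have hmono : Antitone fun k => closure (f '' {x : ℕ → ℕ | ∀ i < k, x i ≤ b i}) := by
    intro k l hkl
    exact closure_mono (image_mono fun y hy i hi => hy i (hi.trans_le hkl))
  have htend := tendsto_measure_iInter_atTop
    (s := fun k => closure (f '' {x : ℕ → ℕ | ∀ i < k, x i ≤ b i}))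
    (fun k => isClosed_closure.measurableSet.nullMeasurableSet) hmono
    ⟨0, measure_ne_top μ _⟩
  rw [← hcap] at htend
  have hbound : μ (range f) ≤ μ (f '' K) + ε := by
    have htend2 : Filter.Tendsto
        (fun k => μ (closure (f '' {x : ℕ → ℕ | ∀ i < k, x i ≤ b i})) + ε) atTop
        (𝓝 (μ (f '' K) + ε)) := htend.add tendsto_const_nhds
    refine ge_of_tendsto' htend2 fun k => ?_
    calc μ (range f) ≤ μ (f '' {x | ∀ i < k, x i ≤ b i})
          + ∑ i ∈ Finset.range k, ε / 2 ^ (i + 1) := hmain k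
      _ ≤ μ (closure (f '' {x | ∀ i < k, x i ≤ b i})) + ε :=
          add_le_add (measure_mono subset_closure) (hsum k)
  exact ⟨f '' K, hCcomp, image_subset_range f K, hbound⟩

/-- An analytic set is sandwiched between Borel sets of equal measure. -/
private lemma aux_analytic_approx {Z : Type} [TopologicalSpace Z] [T2Space Z]
    [FirstCountableTopology Z] [MeasurableSpace Z] [OpensMeasurableSpace Z]
    (μ : Measure Z) [IsFiniteMeasure μ] {S : Set Z} (hS : AnalyticSet S) :
    ∃ V U : Set Z, MeasurableSet V ∧ MeasurableSet U ∧ V ⊆ S ∧ S ⊆ U ∧ μ (U \ V) = 0 := by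
  have hC : ∀ n : ℕ, ∃ C : Set Z, IsCompact C ∧ C ⊆ S ∧ μ S ≤ μ C + ((n : ENNReal))⁻¹ :=
    fun n => aux_analytic_inner μ hS (ENNReal.inv_pos.mpr (ENNReal.natCast_ne_top n))
  choose C hCcomp hCsub hCle using hC
  refine ⟨⋃ n, C n, toMeasurable μ S,
    MeasurableSet.iUnion fun n => (hCcomp n).isClosed.measurableSet,
    measurableSet_toMeasurable μ S, iUnion_subset hCsub, subset_toMeasurable μ S, ?_⟩
  have hV : μ S ≤ μ (⋃ n, C n) := by
    refine ENNReal.le_of_forall_pos_le_add fun δ hδ _ => ?_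
    obtain ⟨n, hn⟩ := ENNReal.exists_inv_nat_lt (a := (δ : ENNReal))
      (by exact_mod_cast hδ.ne')
    exact (hCle n).trans (add_le_add (measure_mono (subset_iUnion C n)) hn.le)
  rw [measure_diff (subset_trans (iUnion_subset hCsub) (subset_toMeasurable μ S))
    ((MeasurableSet.iUnion fun n => (hCcomp n).isClosed.measurableSet).nullMeasurableSet)
    (measure_ne_top μ _), measure_toMeasurable]
  exact tsub_eq_zero_of_le hV

/-- Measurable projection theorem for a complete probability space over a countably
generated σ-algebra, with Polish second factor. -/
private lemma aux_measurableSet_proj {Ω : Type} [MeasurableSpace Ω]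
    [MeasurableSpace.CountablyGenerated Ω]
    (P : Measure Ω) [IsProbabilityMeasure P]
    (hcomplete : ∀ s t : Set Ω, MeasurableSet t → P t = 0 → s ⊆ t → MeasurableSet s)
    {Y : Type} [TopologicalSpace Y] [PolishSpace Y] [MeasurableSpace Y] [BorelSpace Y]
    {A : Set (Ω × Y)} (hA : MeasurableSet A) :
    MeasurableSet {ω | ∃ y, (ω, y) ∈ A} := by
  classical
  set g := MeasurableSpace.mapNatBool Ω with hgdef
  have hg : Measurable g := MeasurableSpace.measurable_mapNatBool Ω
  have hle : (inferInstance : MeasurableSpace Ω) ≤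
      MeasurableSpace.comap g inferInstance := by
    rw [← MeasurableSpace.generateFrom_natGeneratingSequence Ω]
    refine MeasurableSpace.generateFrom_le ?_
    rintro s ⟨n, rfl⟩
    refine ⟨{y : ℕ → Bool | y n = true}, ?_, ?_⟩
    · have h : {y : ℕ → Bool | y n = true} = (fun f : ℕ → Bool => f n) ⁻¹' {true} := rfl
      rw [h]
      exact measurable_pi_apply n (measurableSet_singleton true)
    · ext ω
      simp [hgdef, MeasurableSpace.mapNatBool]
  have hprod : (inferInstance : MeasurableSpace (Ω × Y)) ≤
      MeasurableSpace.comap (Prod.map g (id : Y → Y)) inferInstance := by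
    have h1 : MeasurableSpace.comap (Prod.fst : Ω × Y → Ω) inferInstance ≤
        MeasurableSpace.comap (Prod.map g (id : Y → Y)) inferInstance := by
      calc MeasurableSpace.comap (Prod.fst : Ω × Y → Ω) inferInstance
          ≤ MeasurableSpace.comap Prod.fst (MeasurableSpace.comap g inferInstance) :=
            MeasurableSpace.comap_mono hle
        _ = MeasurableSpace.comap (Prod.fst ∘ Prod.map g (id : Y → Y)) inferInstance := by
            rw [MeasurableSpace.comap_comp]; rfl
        _ = MeasurableSpace.comap (Prod.map g (id : Y → Y))
              (MeasurableSpace.comap Prod.fst inferInstance) :=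
            (MeasurableSpace.comap_comp).symm
        _ ≤ _ := MeasurableSpace.comap_mono measurable_fst.comap_le
    have h2 : MeasurableSpace.comap (Prod.snd : Ω × Y → Y) inferInstance ≤
        MeasurableSpace.comap (Prod.map g (id : Y → Y)) inferInstance := by
      calc MeasurableSpace.comap (Prod.snd : Ω × Y → Y) inferInstance
          = MeasurableSpace.comap (Prod.snd ∘ Prod.map g (id : Y → Y)) inferInstance := rfl
        _ = MeasurableSpace.comap (Prod.map g (id : Y → Y))
              (MeasurableSpace.comap Prod.snd inferInstance) :=
            (MeasurableSpace.comap_comp).symm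
        _ ≤ _ := MeasurableSpace.comap_mono measurable_snd.comap_le
    exact sup_le h1 h2
  obtain ⟨A', hA', hpre⟩ := MeasurableSpace.measurableSet_comap.mp (hprod A hA)
  haveI : PolishSpace (ℕ → Bool) := { }
  have hSana : AnalyticSet (Prod.fst '' A') :=
    hA'.analyticSet.image_of_continuous continuous_fst
  haveI : IsProbabilityMeasure (P.map g) := Measure.isProbabilityMeasure_map hg.aemeasurable
  obtain ⟨V, U, hV, hU, hVS, hSU, hnull⟩ := aux_analytic_approx (P.map g) hSana
  have hset : {ω | ∃ y, (ω, y) ∈ A} = g ⁻¹' (Prod.fst '' A') := by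
    ext ω
    constructor
    · rintro ⟨y, hy⟩
      rw [← hpre] at hy
      exact ⟨(g ω, y), hy, rfl⟩
    · rintro ⟨⟨p1, p2⟩, hp, hfst⟩
      refine ⟨p2, ?_⟩
      rw [← hpre]
      show (g ω, p2) ∈ A'
      have : p1 = g ω := hfst
      rwa [this] at hp
  rw [hset]
  have hsplit : g ⁻¹' (Prod.fst '' A') =
      g ⁻¹' V ∪ (g ⁻¹' (Prod.fst '' A') \ g ⁻¹' V) :=
    (union_diff_cancel (preimage_mono hVS)).symm
  rw [hsplit]
  refine (hg hV).union (hcomplete _ (g ⁻¹' (U \ V)) (hg (hU.diff hV)) ?_ ?_)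
  · rw [← Measure.map_apply hg (hU.diff hV)]; exact hnull
  · rw [preimage_diff]
    exact diff_subset_diff_left (preimage_mono hSU)

end AuxProjection

section AuxRDS

variable {Ω : Type} [MeasurableSpace Ω] {X : Type} [MetricSpace X] [CompactSpace X]
  [MeasurableSpace X] [BorelSpace X]

private lemma aux_measurable_Tn {ϑ : Ω → Ω} (hϑ : Measurable ϑ) {T : Ω → X → X}
    (hT : Measurable fun p : Ω × X => T p.1 p.2) (m : ℕ) :
    Measurable fun p : Ω × X => Tn ϑ T m p.1 p.2 := by
  induction m with
  | zero => exact measurable_snd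
  | succ m ih =>
    have : (fun p : Ω × X => Tn ϑ T (m + 1) p.1 p.2)
        = (fun p : Ω × X => Tn ϑ T m p.1 p.2) ∘ (fun p : Ω × X => (ϑ p.1, T p.1 p.2)) := rfl
    rw [this]
    exact ih.comp ((hϑ.comp measurable_fst).prodMk hT)

private lemma aux_dn_self (ϑ : Ω → Ω) (T : Ω → X → X) (n : ℕ) (ω : Ω) (y : X) :
    dn ϑ T n ω y y = 0 := by
  unfold dn
  have : (fun i => nndist (Tn ϑ T i ω y) (Tn ϑ T i ω y)) = fun _ : ℕ => (0 : NNReal) := by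
    funext i; simp
  rw [this]
  simp

private lemma aux_measurable_dn {ϑ : Ω → Ω} (hϑ : Measurable ϑ) {T : Ω → X → X}
    (hT : Measurable fun p : Ω × X => T p.1 p.2) (n : ℕ) :
    Measurable fun p : Ω × (X × X) => dn ϑ T n p.1 p.2.1 p.2.2 := by
  have key : Measurable fun p : Ω × (X × X) =>
      ((Finset.range n).sup fun i =>
        nndist (Tn ϑ T i p.1 p.2.1) (Tn ϑ T i p.1 p.2.2)) := by
    induction n with
    | zero => simpa using measurable_const
    | succ n ih =>
      have h1 : Measurable fun p : Ω × (X × X) =>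
          nndist (Tn ϑ T n p.1 p.2.1) (Tn ϑ T n p.1 p.2.2) := by
        apply Measurable.nndist
        · exact (aux_measurable_Tn hϑ hT n).comp
            (measurable_fst.prodMk (measurable_fst.comp measurable_snd))
        · exact (aux_measurable_Tn hϑ hT n).comp
            (measurable_fst.prodMk (measurable_snd.comp measurable_snd))
      simp only [Finset.range_add_one, Finset.sup_insert]
      exact h1.sup ih
  exact key.coe_nnreal_real

/-- Uniform bound on the cardinality of `(ω,n,ε)`-separated sets. -/
private lemma aux_card_bound (ϑ : Ω → Ω) (T : Ω → X → X) (n : ℕ) {ε : ℝ} (hε : 0 < ε) :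
    ∃ N : ℕ, ∀ (ω : Ω) (F : Finset X),
      (∀ y ∈ F, ∀ z ∈ F, y ≠ z → ε < dn ϑ T n ω y z) → F.card ≤ N := by
  classical
  have htb : TotallyBounded (univ : Set (Fin n → X)) := isCompact_univ.totallyBounded
  obtain ⟨t, htfin, htcov⟩ := (Metric.totallyBounded_iff).mp htb (ε / 2) (by linarith)
  refine ⟨htfin.toFinset.card, fun ω F hF => ?_⟩
  set Φ : X → (Fin n → X) := fun y i => Tn ϑ T (i : ℕ) ω y with hΦ
  have hdist : ∀ y z : X, dn ϑ T n ω y z = dist (Φ y) (Φ z) := by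
    intro y z
    rw [dist_pi_def]
    unfold dn
    congr 1
    apply le_antisymm
    · refine Finset.sup_le fun i hi => ?_
      exact Finset.le_sup (f := fun b : Fin n => nndist (Φ y b) (Φ z b))
        (Finset.mem_univ (⟨i, Finset.mem_range.mp hi⟩ : Fin n))
    · refine Finset.sup_le fun i _ => ?_
      exact Finset.le_sup (f := fun j : ℕ => nndist (Tn ϑ T j ω y) (Tn ϑ T j ω z))
        (Finset.mem_range.mpr i.2)
  have hc : ∀ y ∈ F, ∃ c ∈ t, Φ y ∈ Metric.ball c (ε / 2) := by
    intro y _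
    have := htcov (mem_univ (Φ y))
    simpa using this
  choose! c hct hcball using hc
  have hinj : Set.InjOn c ↑F := by
    intro y hy z hz hcyz
    by_contra hne
    have h1 := hF y hy z hz hne
    rw [hdist] at h1
    have h2 : dist (Φ y) (c z) < ε / 2 := by
      have := Metric.mem_ball.mp (hcball y hy)
      rwa [hcyz] at this
    have h3 : dist (Φ z) (c z) < ε / 2 := Metric.mem_ball.mp (hcball z hz)
    have htri : dist (Φ y) (Φ z) ≤ dist (Φ y) (c z) + dist (Φ z) (c z) :=
      dist_triangle_right _ _ _
    linarith
  refine Finset.card_le_card_of_injOn c (fun y hy => htfin.mem_toFinset.mpr (hct y hy)) hinj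

/-- Bridging finite separated subsets and tuples. -/
private lemma aux_config_iff (cond : X → Prop) (sep : X → X → Prop)
    (hirr : ∀ y, ¬ sep y y) (q : ℕ) :
    (∃ F : Finset X, (∀ y ∈ F, cond y) ∧ (∀ y ∈ F, ∀ z ∈ F, y ≠ z → sep y z) ∧ F.card = q)
      ↔ ∃ v : Fin q → X, (∀ i, cond (v i)) ∧ ∀ i j : Fin q, i ≠ j → sep (v i) (v j) := by
  classical
  constructor
  · rintro ⟨F, hcond, hsep, rfl⟩
    set e := F.equivFin
    refine ⟨fun i => (e.symm i).1, fun i => hcond _ (e.symm i).2, fun i j hij => ?_⟩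
    refine hsep _ (e.symm i).2 _ (e.symm j).2 fun h => hij ?_
    have : e.symm i = e.symm j := Subtype.ext h
    exact e.symm.injective this
  · rintro ⟨v, hcond, hsep⟩
    have hinj : Function.Injective v := by
      intro i j hij
      by_contra hne
      exact hirr (v i) (hij ▸ hsep i j hne)
    refine ⟨Finset.image v Finset.univ, ?_, ?_, ?_⟩
    · intro y hy
      obtain ⟨i, -, rfl⟩ := Finset.mem_image.mp hy
      exact hcond i
    · intro y hy z hz hne
      obtain ⟨i, -, rfl⟩ := Finset.mem_image.mp hy
      obtain ⟨j, -, rfl⟩ := Finset.mem_image.mp hz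
      exact hsep i j fun h => hne (h ▸ rfl)
    · rw [Finset.card_image_of_injective _ hinj, Finset.card_univ, Fintype.card_fin]

end AuxRDS

/-- Measurability of `t_{n,l}(·,ε)` and `s_n(·,ε)`, and `t_{n,l} ↑ s_n` as `l → ∞`,
    with `t_{n,l}(ω,ε) = s_n(ω,ε)` for all large `l` (for each fixed `ω`). -/
theorem sepMaxCard_measurable_of_approx
    {Ω : Type} [MeasurableSpace Ω] {X : Type} [MetricSpace X] [CompactSpace X]
    [MeasurableSpace X] [BorelSpace X]
    (P : Measure Ω) [IsProbabilityMeasure P]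
    -- `F` is complete, countably generated and separates points
    (hcomplete : ∀ s t : Set Ω, MeasurableSet t → P t = 0 → s ⊆ t → MeasurableSet s)
    [MeasurableSpace.CountablyGenerated Ω]
    (hsepPts : ∀ ω₁ ω₂ : Ω, ω₁ ≠ ω₂ → ∃ s : Set Ω, MeasurableSet s ∧ ω₁ ∈ s ∧ ω₂ ∉ s)
    -- `ϑ` is an invertible `P`-preserving transformation
    (ϑ : Ω → Ω) (hϑ : MeasurePreserving ϑ P P) (hϑbij : Function.Bijective ϑ)
    -- `E` is measurable with compact fibers
    (E : Set (Ω × X)) (hE : MeasurableSet E) (hEcomp : ∀ ω, IsCompact (fiber E ω))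
    -- `T` is a continuous bundle RDS on `E`
    (T : Ω → X → X) (hTmap : ∀ ω, MapsTo (T ω) (fiber E ω) (fiber E (ϑ ω)))
    (hTmeas : Measurable fun p : Ω × X => T p.1 p.2)
    (hTcont : ∀ᵐ ω ∂P, ContinuousOn (T ω) (fiber E ω))
    (x : X) (hx : x ∈ XE E) (k n : ℕ) (hk : n ≤ k) (ε : ℝ) (hε : 0 < ε) :
    (∀ l : ℕ, 1 ≤ l → Measurable fun ω => sepMaxCardGe ϑ T E n k ε l x ω) ∧
    Measurable (fun ω => sepMaxCard ϑ T E n k ε x ω) ∧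
    (∀ ω : Ω, ∀ l l' : ℕ, 1 ≤ l → l ≤ l' →
      sepMaxCardGe ϑ T E n k ε l x ω ≤ sepMaxCardGe ϑ T E n k ε l' x ω) ∧
    (∀ ω : Ω, ∀ l : ℕ, 1 ≤ l →
      sepMaxCardGe ϑ T E n k ε l x ω ≤ sepMaxCard ϑ T E n k ε x ω) ∧
    (∀ ω : Ω, ∃ L : ℕ, 1 ≤ L ∧ ∀ l ≥ L,
      sepMaxCardGe ϑ T E n k ε l x ω = sepMaxCard ϑ T E n k ε x ω) := by
  classical
  have hϑm : Measurable ϑ := hϑ.measurable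
  obtain ⟨N, hN⟩ := aux_card_bound ϑ T n hε
  -- basic facts about the defining sets
  have h0s : ∀ ω : Ω, (0 : ℕ) ∈ {q : ℕ | ∃ F : Finset X, ↑F ⊆ preFiber ϑ T E k x ω ∧
      IsSep ϑ T n ε ω ↑F ∧ F.card = q} := by
    intro ω
    exact ⟨∅, by simp, fun y hy => absurd hy (by simp), rfl⟩
  have h0l : ∀ (l : ℕ) (ω : Ω), (0 : ℕ) ∈ {q : ℕ | ∃ F : Finset X,
      ↑F ⊆ preFiber ϑ T E k x ω ∧
      (∀ y ∈ F, ∀ z ∈ F, y ≠ z → ε + 1 / (l : ℝ) ≤ dn ϑ T n ω y z) ∧ F.card = q} := by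
    intro l ω
    exact ⟨∅, by simp, fun y hy => absurd hy (by simp), rfl⟩
  have hbs : ∀ ω : Ω, BddAbove {q : ℕ | ∃ F : Finset X, ↑F ⊆ preFiber ϑ T E k x ω ∧
      IsSep ϑ T n ε ω ↑F ∧ F.card = q} := by
    intro ω
    refine ⟨N, ?_⟩
    rintro q ⟨F, hsub, hsep, rfl⟩
    exact hN ω F fun y hy z hz hne => hsep y hy z hz hne
  have hsubl : ∀ l : ℕ, 1 ≤ l → ∀ ω : Ω,
      {q : ℕ | ∃ F : Finset X, ↑F ⊆ preFiber ϑ T E k x ω ∧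
        (∀ y ∈ F, ∀ z ∈ F, y ≠ z → ε + 1 / (l : ℝ) ≤ dn ϑ T n ω y z) ∧ F.card = q} ⊆
      {q : ℕ | ∃ F : Finset X, ↑F ⊆ preFiber ϑ T E k x ω ∧
        IsSep ϑ T n ε ω ↑F ∧ F.card = q} := by
    intro l hl ω q
    rintro ⟨F, hsub, hsep, rfl⟩
    have hlpos : (0 : ℝ) < 1 / (l : ℝ) :=
      one_div_pos.mpr (by exact_mod_cast Nat.lt_of_lt_of_le Nat.zero_lt_one hl)
    refine ⟨F, hsub, fun y hy z hz hne => ?_, rfl⟩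
    have := hsep y hy z hz hne
    linarith
  have hbl : ∀ l : ℕ, 1 ≤ l → ∀ ω : Ω,
      BddAbove {q : ℕ | ∃ F : Finset X, ↑F ⊆ preFiber ϑ T E k x ω ∧
        (∀ y ∈ F, ∀ z ∈ F, y ≠ z → ε + 1 / (l : ℝ) ≤ dn ϑ T n ω y z) ∧ F.card = q} :=
    fun l hl ω => (hbs ω).mono (hsubl l hl ω)
  -- monotonicity in l (item 3)
  have hmono : ∀ ω : Ω, ∀ l l' : ℕ, 1 ≤ l → l ≤ l' →
      sepMaxCardGe ϑ T E n k ε l x ω ≤ sepMaxCardGe ϑ T E n k ε l' x ω := by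
    intro ω l l' hl hll'
    refine csSup_le_csSup (hbl l' (hl.trans hll') ω) ⟨0, h0l l ω⟩ ?_
    rintro q ⟨F, hsub, hsep, rfl⟩
    have hlpos : (0 : ℝ) < (l : ℝ) := by exact_mod_cast Nat.lt_of_lt_of_le Nat.zero_lt_one hl
    have hdiv : 1 / (l' : ℝ) ≤ 1 / (l : ℝ) :=
      one_div_le_one_div_of_le hlpos (by exact_mod_cast hll')
    refine ⟨F, hsub, fun y hy z hz hne => ?_, rfl⟩
    have := hsep y hy z hz hne
    linarith
  -- item 4
  have hle_s : ∀ ω : Ω, ∀ l : ℕ, 1 ≤ l →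
      sepMaxCardGe ϑ T E n k ε l x ω ≤ sepMaxCard ϑ T E n k ε x ω := by
    intro ω l hl
    exact csSup_le_csSup (hbs ω) ⟨0, h0l l ω⟩ (hsubl l hl ω)
  -- item 5
  have heventually : ∀ ω : Ω, ∃ L : ℕ, 1 ≤ L ∧ ∀ l ≥ L,
      sepMaxCardGe ϑ T E n k ε l x ω = sepMaxCard ϑ T E n k ε x ω := by
    intro ω
    have hmem : sepMaxCard ϑ T E n k ε x ω ∈ {q : ℕ | ∃ F : Finset X,
        ↑F ⊆ preFiber ϑ T E k x ω ∧ IsSep ϑ T n ε ω ↑F ∧ F.card = q} :=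
      Nat.sSup_mem ⟨0, h0s ω⟩ (hbs ω)
    obtain ⟨F, hsub, hsep, hcard⟩ := hmem
    by_cases hF1 : F.card ≤ 1
    · refine ⟨1, le_refl 1, fun l hl => ?_⟩
      refine le_antisymm (hle_s ω l hl) ?_
      rw [← hcard]
      refine le_csSup (hbl l hl ω) ⟨F, hsub, fun y hy z hz hne => ?_, rfl⟩
      exact absurd (Finset.card_le_one.mp hF1 y hy z hz) hne
    · push_neg at hF1
      set D : Finset (X × X) := (F ×ˢ F).filter (fun p => p.1 ≠ p.2) with hD
      have hDne : D.Nonempty := by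
        obtain ⟨a, ha, b, hb, hab⟩ := Finset.one_lt_card.mp hF1
        exact ⟨(a, b), Finset.mem_filter.mpr ⟨Finset.mem_product.mpr ⟨ha, hb⟩, hab⟩⟩
      set G : Finset ℝ := D.image (fun p => dn ϑ T n ω p.1 p.2) with hG
      have hGne : G.Nonempty := hDne.image _
      have hεm : ε < G.min' hGne := by
        obtain ⟨p, hpD, hpm⟩ := Finset.mem_image.mp (G.min'_mem hGne)
        obtain ⟨hpF, hpne⟩ := Finset.mem_filter.mp hpD
        obtain ⟨hp1, hp2⟩ := Finset.mem_product.mp hpF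
        rw [← hpm]
        exact hsep p.1 hp1 p.2 hp2 hpne
      obtain ⟨L0, hL0⟩ := exists_nat_one_div_lt (show (0 : ℝ) < G.min' hGne - ε by linarith)
      refine ⟨L0 + 1, Nat.le_add_left 1 L0, fun l hl => ?_⟩
      have hl1 : 1 ≤ l := le_trans (Nat.le_add_left 1 L0) hl
      refine le_antisymm (hle_s ω l hl1) ?_
      rw [← hcard]
      refine le_csSup (hbl l hl1 ω) ⟨F, hsub, fun y hy z hz hne => ?_, rfl⟩
      have hmem' : dn ϑ T n ω y z ∈ G :=
        Finset.mem_image.mpr ⟨(y, z),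
          Finset.mem_filter.mpr ⟨Finset.mem_product.mpr ⟨hy, hz⟩, hne⟩, rfl⟩
      have h1 : G.min' hGne ≤ dn ϑ T n ω y z := G.min'_le _ hmem'
      have hLpos : (0 : ℝ) < ((L0 : ℝ) + 1) := by positivity
      have h2 : 1 / (l : ℝ) ≤ 1 / ((L0 : ℝ) + 1) := by
        apply one_div_le_one_div_of_le hLpos
        exact_mod_cast hl
      linarith
  -- measurability core
  have hmeas_core : ∀ R : Set ℝ, MeasurableSet R → R ⊆ Ioi ε →
      Measurable (fun ω => sSup {q : ℕ | ∃ F : Finset X, ↑F ⊆ preFiber ϑ T E k x ω ∧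
        (∀ y ∈ F, ∀ z ∈ F, y ≠ z → dn ϑ T n ω y z ∈ R) ∧ F.card = q}) := by
    intro R hR hRsub
    have h0 : ∀ ω : Ω, (0 : ℕ) ∈ {q : ℕ | ∃ F : Finset X, ↑F ⊆ preFiber ϑ T E k x ω ∧
        (∀ y ∈ F, ∀ z ∈ F, y ≠ z → dn ϑ T n ω y z ∈ R) ∧ F.card = q} :=
      fun ω => ⟨∅, by simp, fun y hy => absurd hy (by simp), rfl⟩
    have hb : ∀ ω : Ω, BddAbove {q : ℕ | ∃ F : Finset X, ↑F ⊆ preFiber ϑ T E k x ω ∧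
        (∀ y ∈ F, ∀ z ∈ F, y ≠ z → dn ϑ T n ω y z ∈ R) ∧ F.card = q} := by
      intro ω
      refine ⟨N, ?_⟩
      rintro q ⟨F, hsub, hsep, rfl⟩
      exact hN ω F fun y hy z hz hne => hRsub (hsep y hy z hz hne)
    have hdc : ∀ (ω : Ω) (q q' : ℕ), q' ≤ q →
        q ∈ {q : ℕ | ∃ F : Finset X, ↑F ⊆ preFiber ϑ T E k x ω ∧
          (∀ y ∈ F, ∀ z ∈ F, y ≠ z → dn ϑ T n ω y z ∈ R) ∧ F.card = q} →
        q' ∈ {q : ℕ | ∃ F : Finset X, ↑F ⊆ preFiber ϑ T E k x ω ∧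
          (∀ y ∈ F, ∀ z ∈ F, y ≠ z → dn ϑ T n ω y z ∈ R) ∧ F.card = q} := by
      rintro ω q q' hle ⟨F, hsub, hsep, rfl⟩
      obtain ⟨F', hF'sub, hF'card⟩ := Finset.exists_subset_card_eq hle
      exact ⟨F', (Finset.coe_subset.mpr hF'sub).trans hsub,
        fun y hy z hz hne => hsep y (hF'sub hy) z (hF'sub hz) hne, hF'card⟩
    have hirr : ∀ (ω : Ω) (y : X), ¬ dn ϑ T n ω y y ∈ R := by
      intro ω y hmem
      have := hRsub hmem
      rw [aux_dn_self] at this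
      exact absurd this (by simpa using hε.le)
    have hlev : ∀ q : ℕ, {ω : Ω | q ≤ sSup {q : ℕ | ∃ F : Finset X,
        ↑F ⊆ preFiber ϑ T E k x ω ∧
        (∀ y ∈ F, ∀ z ∈ F, y ≠ z → dn ϑ T n ω y z ∈ R) ∧ F.card = q}} =
        {ω : Ω | ∃ v : Fin q → X, (∀ i, ((ω, v i) ∈ E ∧ Tn ϑ T k ω (v i) = x)) ∧
          ∀ i j : Fin q, i ≠ j → dn ϑ T n ω (v i) (v j) ∈ R} := by
      intro q
      ext ω
      simp only [mem_setOf_eq]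
      have h1 : q ≤ sSup {q : ℕ | ∃ F : Finset X, ↑F ⊆ preFiber ϑ T E k x ω ∧
          (∀ y ∈ F, ∀ z ∈ F, y ≠ z → dn ϑ T n ω y z ∈ R) ∧ F.card = q} ↔
          q ∈ {q : ℕ | ∃ F : Finset X, ↑F ⊆ preFiber ϑ T E k x ω ∧
          (∀ y ∈ F, ∀ z ∈ F, y ≠ z → dn ϑ T n ω y z ∈ R) ∧ F.card = q} :=
        ⟨fun h => hdc ω _ q h (Nat.sSup_mem ⟨0, h0 ω⟩ (hb ω)),
         fun h => le_csSup (hb ω) h⟩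
      rw [h1]
      have h2 := aux_config_iff (X := X) (fun y => (ω, y) ∈ E ∧ Tn ϑ T k ω y = x)
        (fun y z => dn ϑ T n ω y z ∈ R) (hirr ω) q
      rw [← h2]
      constructor
      · rintro ⟨F, hsub, hsep, rfl⟩
        refine ⟨F, fun y hy => ?_, hsep, rfl⟩
        have := hsub hy
        exact ⟨this.1, this.2⟩
      · rintro ⟨F, hcond, hsep, rfl⟩
        refine ⟨F, fun y hy => ?_, hsep, rfl⟩
        exact ⟨(hcond y hy).1, (hcond y hy).2⟩
    have hlevmeas : ∀ q : ℕ, MeasurableSet {ω : Ω | q ≤ sSup {q : ℕ | ∃ F : Finset X,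
        ↑F ⊆ preFiber ϑ T E k x ω ∧
        (∀ y ∈ F, ∀ z ∈ F, y ≠ z → dn ϑ T n ω y z ∈ R) ∧ F.card = q}} := by
      intro q
      rw [hlev q]
      have hA : MeasurableSet {p : Ω × (Fin q → X) |
          (∀ i, ((p.1, p.2 i) ∈ E ∧ Tn ϑ T k p.1 (p.2 i) = x)) ∧
          ∀ i j : Fin q, i ≠ j → dn ϑ T n p.1 (p.2 i) (p.2 j) ∈ R} := by
        have hsplit : {p : Ω × (Fin q → X) |
            (∀ i, ((p.1, p.2 i) ∈ E ∧ Tn ϑ T k p.1 (p.2 i) = x)) ∧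
            ∀ i j : Fin q, i ≠ j → dn ϑ T n p.1 (p.2 i) (p.2 j) ∈ R} =
            ((⋂ i : Fin q, ({p : Ω × (Fin q → X) | (p.1, p.2 i) ∈ E} ∩
              {p : Ω × (Fin q → X) | Tn ϑ T k p.1 (p.2 i) = x})) ∩
            ⋂ i : Fin q, ⋂ j : Fin q,
              {p : Ω × (Fin q → X) | i ≠ j → dn ϑ T n p.1 (p.2 i) (p.2 j) ∈ R}) := by
          ext p
          simp only [mem_setOf_eq, mem_inter_iff, mem_iInter]
          try tauto
        rw [hsplit]
        have hproji : ∀ i : Fin q, Measurable fun p : Ω × (Fin q → X) => (p.1, p.2 i) :=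
          fun i => measurable_fst.prodMk ((measurable_pi_apply i).comp measurable_snd)
        refine MeasurableSet.inter (MeasurableSet.iInter fun i => ?_)
          (MeasurableSet.iInter fun i => MeasurableSet.iInter fun j => ?_)
        · refine MeasurableSet.inter ((hproji i) hE) ?_
          exact ((aux_measurable_Tn hϑm hTmeas k).comp (hproji i)) (measurableSet_singleton x)
        · by_cases hij : i = j
          · subst hij
            simp only [ne_eq, not_true_eq_false, false_implies, setOf_true]
            exact MeasurableSet.univ
          · have : {p : Ω × (Fin q → X) | i ≠ j → dn ϑ T n p.1 (p.2 i) (p.2 j) ∈ R} =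
                {p : Ω × (Fin q → X) | dn ϑ T n p.1 (p.2 i) (p.2 j) ∈ R} := by
              ext p
              simp [hij]
            rw [this]
            have hmap : Measurable fun p : Ω × (Fin q → X) =>
                ((p.1, (p.2 i, p.2 j)) : Ω × (X × X)) :=
              measurable_fst.prodMk (((measurable_pi_apply i).comp measurable_snd).prodMk
                ((measurable_pi_apply j).comp measurable_snd))
            exact ((aux_measurable_dn hϑm hTmeas n).comp hmap) hR
      exact aux_measurableSet_proj P hcomplete hA
    apply measurable_to_countable'
    intro q
    have hpre : (fun ω => sSup {q : ℕ | ∃ F : Finset X, ↑F ⊆ preFiber ϑ T E k x ω ∧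
        (∀ y ∈ F, ∀ z ∈ F, y ≠ z → dn ϑ T n ω y z ∈ R) ∧ F.card = q}) ⁻¹' {q} =
        {ω : Ω | q ≤ sSup {q : ℕ | ∃ F : Finset X, ↑F ⊆ preFiber ϑ T E k x ω ∧
          (∀ y ∈ F, ∀ z ∈ F, y ≠ z → dn ϑ T n ω y z ∈ R) ∧ F.card = q}} \
        {ω : Ω | q + 1 ≤ sSup {q : ℕ | ∃ F : Finset X, ↑F ⊆ preFiber ϑ T E k x ω ∧
          (∀ y ∈ F, ∀ z ∈ F, y ≠ z → dn ϑ T n ω y z ∈ R) ∧ F.card = q}} := by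
      ext ω
      simp only [mem_preimage, mem_singleton_iff, mem_diff, mem_setOf_eq]
      omega
    rw [hpre]
    exact (hlevmeas q).diff (hlevmeas (q + 1))
  refine ⟨?_, ?_, hmono, hle_s, heventually⟩
  · intro l hl
    have hlpos : (0 : ℝ) < 1 / (l : ℝ) :=
      one_div_pos.mpr (by exact_mod_cast Nat.lt_of_lt_of_le Nat.zero_lt_one hl)
    have := hmeas_core (Ici (ε + 1 / (l : ℝ))) measurableSet_Ici
      (fun r hr => by simp only [mem_Ioi]; have : ε + 1 / (l : ℝ) ≤ r := hr; linarith)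
    exact this
  · have := hmeas_core (Ioi ε) measurableSet_Ioi (fun r hr => hr)
    exact this


end PreImageRDS
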